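/- Let a, b ∈ ℝ with a < b, let n ∈ ℕ with n ≥ 2, and let p, q > 1 with 1/p + 1/q = 1. Then |A(aⁿ, bⁿ) - L_n^n(a,b)| ≤ (n(b-a)/4)(1/(p+1))^{1/p} · [(|A(a,b)|^{(n-1)q} + |a|^{(n-1)q})^{1/q} + (|A(a,b)|^{(n-1)q} + |b|^{(n-1)q})^{1/q}]. -/

import Mathlib

set_option maxHeartbeats 1000000

open Real MeasureTheory

private lemma intq (c₂ c₁ c₀ u v : ℝ) :
    ∫ x in u..v, (c₂*x^2 + c₁*x + c₀) =
      (c₂/3*v^3 + c₁/2*v^2 + c₀*v) - (c₂/3*u^3 + c₁/2*u^2 + c₀*u) := by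
  have h : ∀ x ∈ Set.uIcc u v, HasDerivAt (fun x : ℝ => c₂/3*x^3 + c₁/2*x^2 + c₀*x)
      (c₂*x^2 + c₁*x + c₀) x := by
    intro x _
    have h := (((hasDerivAt_pow 3 x).const_mul (c₂/3)).add
        ((hasDerivAt_pow 2 x).const_mul (c₁/2))).add ((hasDerivAt_id x).const_mul c₀)
    refine h.congr_deriv ?_
    push_cast; ring
  rw [intervalIntegral.integral_eq_sub_of_hasDerivAt h (by apply Continuous.intervalIntegrable; continuity)]

private lemma stepA (a b : ℝ) (hab : a < b) (k : ℕ) :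
    |(a ^ (k+2) + b ^ (k+2)) / 2 - (b ^ (k+2+1) - a ^ (k+2+1)) / ((((k:ℝ)+2) + 1) * (b - a))|
      ≤ ((k:ℝ)+2) * (b - a) * (|a|^(k+1) + |b|^(k+1)) / 8 := by
  have hba : (0:ℝ) < b - a := sub_pos.2 hab
  set m : ℝ := (a + b) / 2 with hm
  have ham : a ≤ m := by rw [hm]; linarith
  have hmb : m ≤ b := by rw [hm]; linarith
  set A : ℝ := |a| ^ (k+1) with hA
  set B : ℝ := |b| ^ (k+1) with hB
  have hA0 : 0 ≤ A := pow_nonneg (abs_nonneg a) _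
  have hB0 : 0 ≤ B := pow_nonneg (abs_nonneg b) _
  have hg : Continuous fun x : ℝ => (x - m) * x^(k+1) := by continuity
  -- value of the full integral
  have hval : ∫ x in a..b, (x-m)*x^(k+1)
      = (b^(k+3) - a^(k+3))/((k:ℝ)+3) - m * ((b^(k+2) - a^(k+2))/((k:ℝ)+2)) := by
    have hfun : (fun x:ℝ => (x-m)*x^(k+1)) = fun x => x^(k+2) - m * x^(k+1) :=
      funext fun x => by ring
    rw [hfun, intervalIntegral.integral_sub ((continuous_pow _).intervalIntegrable _ _)
      (Continuous.intervalIntegrable (u := fun x:ℝ => m * x^(k+1)) (continuous_const.mul (continuous_pow _)) _ _),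
      intervalIntegral.integral_const_mul, integral_pow, integral_pow]
    push_cast
    ring_nf
  -- key identity
  have key : (a ^ (k+2) + b ^ (k+2)) / 2 - (b ^ (k+2+1) - a ^ (k+2+1)) / ((((k:ℝ)+2) + 1) * (b - a))
      = (((k:ℝ)+2)/(b-a)) * ∫ x in a..b, (x-m)*x^(k+1) := by
    rw [hval, hm]
    have h2 : ((k:ℝ)+2) ≠ 0 := by positivity
    have h3 : ((k:ℝ)+3) ≠ 0 := by positivity
    field_simp
    ring
  -- convexity pointwise bound
  have hconv : ∀ x ∈ Set.Icc a b, |x|^(k+1) ≤ ((b-x)*A + (x-a)*B)/(b-a) := by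
    intro x hx
    have hbx : 0 ≤ b - x := sub_nonneg.2 hx.2
    have hxa : 0 ≤ x - a := sub_nonneg.2 hx.1
    have h1 : |x| ≤ ((b-x)*|a| + (x-a)*|b|)/(b-a) := by
      have hxeq : x = ((b-x)*a + (x-a)*b)/(b-a) := by field_simp; ring
      calc |x| = |((b-x)*a + (x-a)*b)/(b-a)| := by rw [← hxeq]
        _ ≤ (|(b-x)*a| + |(x-a)*b|)/(b-a) := by
            rw [abs_div, abs_of_pos hba]
            gcongr
            exact abs_add_le _ _
        _ = ((b-x)*|a| + (x-a)*|b|)/(b-a) := by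
            rw [abs_mul, abs_mul, abs_of_nonneg hbx, abs_of_nonneg hxa]
    have h2 : |x|^(k+1) ≤ (((b-x)*|a| + (x-a)*|b|)/(b-a))^(k+1) :=
      pow_le_pow_left₀ (abs_nonneg x) h1 _
    have h3 := (convexOn_pow (k+1)).2 (Set.mem_Ici.2 (abs_nonneg a))
      (Set.mem_Ici.2 (abs_nonneg b)) (div_nonneg hbx hba.le) (div_nonneg hxa hba.le)
      (by field_simp; ring)
    simp only [smul_eq_mul] at h3
    calc |x|^(k+1) ≤ (((b-x)*|a| + (x-a)*|b|)/(b-a))^(k+1) := h2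
      _ = ((b-x)/(b-a) * |a| + (x-a)/(b-a) * |b|)^(k+1) := by ring_nf
      _ ≤ (b-x)/(b-a) * A + (x-a)/(b-a) * B := h3
      _ = ((b-x)*A + (x-a)*B)/(b-a) := by ring
  -- bound on [a, m]
  have hcontP : Continuous fun x : ℝ => ((m-x)*((b-x)*A+(x-a)*B)) * (b-a)⁻¹ := by continuity
  have hcontQ : Continuous fun x : ℝ => ((x-m)*((b-x)*A+(x-a)*B)) * (b-a)⁻¹ := by continuity
  have hb1 : |∫ x in a..m, (x-m)*x^(k+1)|
      ≤ (∫ x in a..m, ((m-x)*((b-x)*A+(x-a)*B))) * (b-a)⁻¹ := by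
    calc |∫ x in a..m, (x-m)*x^(k+1)| ≤ ∫ x in a..m, |(x-m)*x^(k+1)| :=
          intervalIntegral.abs_integral_le_integral_abs ham
      _ ≤ ∫ x in a..m, ((m-x)*((b-x)*A+(x-a)*B)) * (b-a)⁻¹ := by
          apply intervalIntegral.integral_mono_on ham
            ((hg.abs).intervalIntegrable _ _) (hcontP.intervalIntegrable _ _)
          intro x hx
          have hx' : x ∈ Set.Icc a b := ⟨hx.1, hx.2.trans hmb⟩
          rw [abs_mul, abs_pow, abs_sub_comm, abs_of_nonneg (sub_nonneg.2 hx.2)]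
          calc (m-x) * |x|^(k+1) ≤ (m-x) * (((b-x)*A+(x-a)*B)/(b-a)) :=
                mul_le_mul_of_nonneg_left (hconv x hx') (sub_nonneg.2 hx.2)
            _ = ((m-x)*((b-x)*A+(x-a)*B)) * (b-a)⁻¹ := by ring
      _ = (∫ x in a..m, ((m-x)*((b-x)*A+(x-a)*B))) * (b-a)⁻¹ := by
          rw [← intervalIntegral.integral_mul_const]
  have hb2 : |∫ x in m..b, (x-m)*x^(k+1)|
      ≤ (∫ x in m..b, ((x-m)*((b-x)*A+(x-a)*B))) * (b-a)⁻¹ := by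
    calc |∫ x in m..b, (x-m)*x^(k+1)| ≤ ∫ x in m..b, |(x-m)*x^(k+1)| :=
          intervalIntegral.abs_integral_le_integral_abs hmb
      _ ≤ ∫ x in m..b, ((x-m)*((b-x)*A+(x-a)*B)) * (b-a)⁻¹ := by
          apply intervalIntegral.integral_mono_on hmb
            ((hg.abs).intervalIntegrable _ _) (hcontQ.intervalIntegrable _ _)
          intro x hx
          have hx' : x ∈ Set.Icc a b := ⟨ham.trans hx.1, hx.2⟩
          rw [abs_mul, abs_pow, abs_of_nonneg (sub_nonneg.2 hx.1)]
          calc (x-m) * |x|^(k+1) ≤ (x-m) * (((b-x)*A+(x-a)*B)/(b-a)) :=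
                mul_le_mul_of_nonneg_left (hconv x hx') (sub_nonneg.2 hx.1)
            _ = ((x-m)*((b-x)*A+(x-a)*B)) * (b-a)⁻¹ := by ring
      _ = (∫ x in m..b, ((x-m)*((b-x)*A+(x-a)*B))) * (b-a)⁻¹ := by
          rw [← intervalIntegral.integral_mul_const]
  -- closed forms
  have e1 : ∫ x in a..m, ((m-x)*((b-x)*A+(x-a)*B)) = (b-a)^3 * (5*A + B) / 48 := by
    rw [show (fun x:ℝ => (m-x)*((b-x)*A+(x-a)*B))
        = fun x => (A-B)*x^2 + ((m+a)*B-(m+b)*A)*x + (m*b*A - m*a*B) from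
      funext fun x => by ring, intq, hm]
    ring
  have e2 : ∫ x in m..b, ((x-m)*((b-x)*A+(x-a)*B)) = (b-a)^3 * (A + 5*B) / 48 := by
    rw [show (fun x:ℝ => (x-m)*((b-x)*A+(x-a)*B))
        = fun x => (B-A)*x^2 + ((m+b)*A-(m+a)*B)*x + (m*a*B - m*b*A) from
      funext fun x => by ring, intq, hm]
    ring
  -- combine
  have hsplit : ∫ x in a..b, (x-m)*x^(k+1)
      = (∫ x in a..m, (x-m)*x^(k+1)) + ∫ x in m..b, (x-m)*x^(k+1) :=
    (intervalIntegral.integral_add_adjacent_intervals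
      (hg.intervalIntegrable _ _) (hg.intervalIntegrable _ _)).symm
  rw [key, hsplit]
  have hc : (0:ℝ) ≤ ((k:ℝ)+2)/(b-a) := by positivity
  calc |((k:ℝ)+2)/(b-a) * ((∫ x in a..m, (x-m)*x^(k+1)) + ∫ x in m..b, (x-m)*x^(k+1))|
      = ((k:ℝ)+2)/(b-a) * |(∫ x in a..m, (x-m)*x^(k+1)) + ∫ x in m..b, (x-m)*x^(k+1)| := by
        rw [abs_mul, abs_of_nonneg hc]
    _ ≤ ((k:ℝ)+2)/(b-a) * (|∫ x in a..m, (x-m)*x^(k+1)| + |∫ x in m..b, (x-m)*x^(k+1)|) :=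
        mul_le_mul_of_nonneg_left (abs_add_le _ _) hc
    _ ≤ ((k:ℝ)+2)/(b-a) * ((∫ x in a..m, ((m-x)*((b-x)*A+(x-a)*B))) * (b-a)⁻¹
          + (∫ x in m..b, ((x-m)*((b-x)*A+(x-a)*B))) * (b-a)⁻¹) :=
        mul_le_mul_of_nonneg_left (add_le_add hb1 hb2) hc
    _ = ((k:ℝ)+2) * (b - a) * (A + B) / 8 := by
        rw [e1, e2]
        field_simp
        ring

private lemma stepB (p : ℝ) (hp : 1 < p) : (1/2 : ℝ) ≤ (1/(p+1) : ℝ) ^ (1/p) := by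
  have hp0 : (0:ℝ) < p := by linarith
  have h2p : p + 1 ≤ (2:ℝ)^p := by
    have := one_add_mul_self_le_rpow_one_add (by norm_num : (-1:ℝ) ≤ 1) hp.le
    norm_num at this
    linarith
  have hstep : ((1/2:ℝ))^p ≤ 1/(p+1) := by
    have h := one_div_le_one_div_of_le (by linarith : (0:ℝ) < p + 1) h2p
    calc ((1/2:ℝ))^p = 1/(2:ℝ)^p := by
          rw [Real.div_rpow (by norm_num) (by norm_num), Real.one_rpow]
      _ ≤ 1/(p+1) := h
  calc (1/2:ℝ) = (((1/2:ℝ))^p)^(1/p) := by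
        rw [← Real.rpow_mul (by norm_num), mul_one_div_cancel hp0.ne', Real.rpow_one]
    _ ≤ (1/(p+1))^(1/p) :=
        Real.rpow_le_rpow (Real.rpow_nonneg (by norm_num) _) hstep (by positivity)

private lemma stepC (x y e q : ℝ) (hq0 : 0 < q) (r : ℕ) (he : e = ((r:ℝ)+1)*q) :
    |x| ^ (r+1) ≤ (|y| ^ e + |x| ^ e) ^ (1/q) := by
  have h1 : ((|x| ^ e : ℝ)) ^ (1/q) = |x| ^ (r+1) := by
    rw [← Real.rpow_mul (abs_nonneg x), he,
      show (((r:ℝ)+1)*q)*(1/q) = ((r+1:ℕ):ℝ) by push_cast; field_simp,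
      Real.rpow_natCast]
  rw [← h1]
  exact Real.rpow_le_rpow (Real.rpow_nonneg (abs_nonneg x) _)
    (le_add_of_nonneg_left (Real.rpow_nonneg (abs_nonneg y) _)) (by positivity)

theorem stmt_17 (a b : ℝ) (hab : a < b) (n : ℕ) (hn : 2 ≤ n)
    (p q : ℝ) (hp : 1 < p) (hq : 1 < q) (hpq : 1 / p + 1 / q = 1) :
    |(a ^ n + b ^ n) / 2 - (b ^ (n + 1) - a ^ (n + 1)) / (((n : ℝ) + 1) * (b - a))|
      ≤ ((n : ℝ) * (b - a) / 4) * (1 / (p + 1)) ^ (1 / p)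
        * ((|(a + b) / 2| ^ (((n : ℝ) - 1) * q) + |a| ^ (((n : ℝ) - 1) * q)) ^ (1 / q)
        + (|(a + b) / 2| ^ (((n : ℝ) - 1) * q) + |b| ^ (((n : ℝ) - 1) * q)) ^ (1 / q)) := by
  obtain ⟨k, rfl⟩ : ∃ k, n = k + 2 := ⟨n - 2, by omega⟩
  have hba : (0:ℝ) < b - a := sub_pos.2 hab
  have hq0 : (0:ℝ) < q := by linarith
  have hT1 := stepC a ((a+b)/2) ((((k+2:ℕ):ℝ) - 1) * q) q hq0 k (by push_cast; ring)
  have hT2 := stepC b ((a+b)/2) ((((k+2:ℕ):ℝ) - 1) * q) q hq0 k (by push_cast; ring)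
  have hcp := stepB p hp
  have hcp0 : (0:ℝ) ≤ (1/(p+1) : ℝ) ^ (1/p) := le_trans (by norm_num) hcp
  have hA0 : (0:ℝ) ≤ |a| ^ (k+1) := pow_nonneg (abs_nonneg a) _
  have hB0 : (0:ℝ) ≤ |b| ^ (k+1) := pow_nonneg (abs_nonneg b) _
  have hstepA := stepA a b hab k
  refine le_trans (le_of_eq (by norm_num)) (hstepA.trans ?_)
  have h1 : (1/2 : ℝ) * (|a| ^ (k+1) + |b| ^ (k+1))
      ≤ (1/(p+1) : ℝ) ^ (1/p) *
        ((|(a+b)/2| ^ ((((k+2:ℕ):ℝ) - 1) * q) + |a| ^ ((((k+2:ℕ):ℝ) - 1) * q)) ^ (1/q)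
          + (|(a+b)/2| ^ ((((k+2:ℕ):ℝ) - 1) * q) + |b| ^ ((((k+2:ℕ):ℝ) - 1) * q)) ^ (1/q)) :=
    mul_le_mul hcp (add_le_add hT1 hT2) (by positivity) hcp0
  calc ((k:ℝ)+2) * (b - a) * (|a|^(k+1) + |b|^(k+1)) / 8
      = (((k+2:ℕ):ℝ) * (b-a) / 4) * ((1/2 : ℝ) * (|a| ^ (k+1) + |b| ^ (k+1))) := by
        push_cast; ring
    _ ≤ (((k+2:ℕ):ℝ) * (b-a) / 4) * ((1/(p+1) : ℝ) ^ (1/p) *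
        ((|(a+b)/2| ^ ((((k+2:ℕ):ℝ) - 1) * q) + |a| ^ ((((k+2:ℕ):ℝ) - 1) * q)) ^ (1/q)
          + (|(a+b)/2| ^ ((((k+2:ℕ):ℝ) - 1) * q) + |b| ^ ((((k+2:ℕ):ℝ) - 1) * q)) ^ (1/q))) :=
        mul_le_mul_of_nonneg_left h1 (by positivity)
    _ = _ := by ring
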